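/- If Z ~ Beta(α₁, α₂+⋯+α_q) and V ~ Dir(α₂,…,α_q) are independent with all α_i > 0 and q > 2, then the random vector (Z, (1−Z)·V) has the Dirichlet distribution Dir(α₁,…,α_q). -/

import Mathlib

open MeasureTheory Finset ProbabilityTheory

/-- `IsDirichlet μ a` says that `μ` is the Dirichlet distribution with parameters `a`:
a probability measure concentrated on the open simplex whose mixed moments are those of
the Dirichlet distribution (which determine it uniquely, the support being compact). -/
def IsDirichlet {q : ℕ} (μ : Measure (Fin q → ℝ)) (a : Fin q → ℝ) : Prop :=
  IsProbabilityMeasure μ ∧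
    μ {x | (∀ i, 0 < x i) ∧ ∑ i, x i = 1} = 1 ∧
    ∀ k : Fin q → ℕ,
      ∫ x, ∏ i, (x i) ^ (k i) ∂μ =
        (∏ i, Real.Gamma (a i + k i) / Real.Gamma (a i)) *
          (Real.Gamma (∑ i, a i) / Real.Gamma (∑ i, a i + ∑ i, (k i : ℝ)))

/-- The Beta(α,β) measure on ℝ, given by its density with respect to Lebesgue measure. -/
noncomputable def betaMeasure (α β : ℝ) : Measure ℝ :=
  MeasureTheory.volume.withDensity fun x =>
    ENNReal.ofReal
      (if 0 < x ∧ x < 1 then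
        (Real.Gamma (α + β) / (Real.Gamma α * Real.Gamma β)) *
          x ^ (α - 1) * (1 - x) ^ (β - 1)
      else 0)

open scoped ENNReal NNReal

lemma real_betaIntegral {u v : ℝ} (hu : 0 < u) (hv : 0 < v) :
    ∫ x in (0:ℝ)..1, x ^ (u - 1) * (1 - x) ^ (v - 1) =
      Real.Gamma u * Real.Gamma v / Real.Gamma (u + v) := by
  have key := Complex.Gamma_mul_Gamma_eq_betaIntegral
    (s := (u : ℂ)) (t := (v : ℂ)) (by simpa using hu) (by simpa using hv)
  have hbeta : Complex.betaIntegral u v =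
      ((∫ x in (0:ℝ)..1, x ^ (u - 1) * (1 - x) ^ (v - 1) : ℝ) : ℂ) := by
    rw [Complex.betaIntegral, ← intervalIntegral.integral_ofReal]
    refine intervalIntegral.integral_congr fun x hx => ?_
    rw [Set.uIcc_of_le (by norm_num)] at hx
    rw [Complex.ofReal_mul, Complex.ofReal_cpow hx.1,
      Complex.ofReal_cpow (by linarith [hx.2])]
    push_cast
    ring
  rw [hbeta, show ((u:ℂ) + v) = ((u + v : ℝ) : ℂ) by push_cast; ring,
    Complex.Gamma_ofReal, Complex.Gamma_ofReal, Complex.Gamma_ofReal,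
    ← Complex.ofReal_mul, ← Complex.ofReal_mul, Complex.ofReal_inj] at key
  have hne : Real.Gamma (u + v) ≠ 0 := (Real.Gamma_pos_of_pos (by linarith)).ne'
  field_simp
  linarith [key]

lemma betaMeasure_moment {a b : ℝ} (ha : 0 < a) (hb : 0 < b) (n K : ℕ) :
    ∫ z, z ^ n * (1 - z) ^ K ∂(_root_.betaMeasure a b) =
      (Real.Gamma (a + n) * Real.Gamma (b + K) * Real.Gamma (a + b)) /
        (Real.Gamma a * Real.Gamma b * Real.Gamma (a + b + n + K)) := by
  set C : ℝ := Real.Gamma (a + b) / (Real.Gamma a * Real.Gamma b) with hC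
  set d : ℝ → ℝ := fun x =>
    if 0 < x ∧ x < 1 then C * x ^ (a - 1) * (1 - x) ^ (b - 1) else 0 with hd
  have hmemIoo : ∀ x : ℝ, (0 < x ∧ x < 1) ↔ x ∈ Set.Ioo (0:ℝ) 1 := fun x => Iff.rfl
  have hdm : Measurable d := by
    apply Measurable.ite
    · exact measurableSet_Ioo (a := (0:ℝ)) (b := 1)
    · fun_prop
    · fun_prop
  have hd0 : ∀ x, 0 ≤ d x := by
    intro x
    rw [hd]
    dsimp only
    split_ifs with h
    · have hc : 0 ≤ C := le_of_lt (div_pos (Real.Gamma_pos_of_pos (by linarith))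
        (mul_pos (Real.Gamma_pos_of_pos ha) (Real.Gamma_pos_of_pos hb)))
      exact mul_nonneg (mul_nonneg hc (Real.rpow_nonneg h.1.le _))
        (Real.rpow_nonneg (by linarith [h.2]) _)
    · exact le_rfl
  have h1 : _root_.betaMeasure a b = volume.withDensity fun x => ((d x).toNNReal : ℝ≥0∞) := rfl
  rw [h1, integral_withDensity_eq_integral_smul (hdm.real_toNNReal)]
  have h2 : ∀ x : ℝ, (d x).toNNReal • (x ^ n * (1 - x) ^ K) =
      Set.indicator (Set.Ioo (0:ℝ) 1)
        (fun x => C * (x ^ (a + n - 1) * (1 - x) ^ (b + K - 1))) x := by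
    intro x
    rw [NNReal.smul_def, Real.coe_toNNReal _ (hd0 x), hd]
    dsimp only
    rw [Set.indicator]
    split_ifs with h h' h'
    · obtain ⟨hx0, hx1⟩ := h
      rw [smul_eq_mul, ← Real.rpow_natCast x n, ← Real.rpow_natCast (1-x) K,
        show C * x ^ (a-1) * (1-x)^(b-1) * (x ^ (n:ℝ) * (1-x)^(K:ℝ))
          = C * ((x ^ (a-1) * x ^ (n:ℝ)) * ((1-x)^(b-1) * (1-x)^(K:ℝ))) by ring,
        ← Real.rpow_add hx0, ← Real.rpow_add (by linarith)]
      ring_nf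
    · exact absurd h h'
    · exact absurd h' h
    · simp
  rw [MeasureTheory.integral_congr_ae (Filter.Eventually.of_forall h2),
    integral_indicator measurableSet_Ioo, ← integral_Ioc_eq_integral_Ioo,
    ← intervalIntegral.integral_of_le (by norm_num : (0:ℝ) ≤ 1),
    intervalIntegral.integral_const_mul,
    real_betaIntegral (by positivity) (by positivity), hC]
  have g1 : Real.Gamma a ≠ 0 := (Real.Gamma_pos_of_pos ha).ne'
  have g2 : Real.Gamma b ≠ 0 := (Real.Gamma_pos_of_pos hb).ne'
  have g3 : Real.Gamma (a + ↑n + (b + ↑K)) ≠ 0 :=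
    (Real.Gamma_pos_of_pos (by positivity)).ne'
  rw [show a + b + (n:ℝ) + K = a + ↑n + (b + ↑K) by ring]
  field_simp

/-- If `Z ~ Beta(α₁, α₂+⋯+α_q)` and `V ~ Dir(α₂,…,α_q)` are independent (`q > 2`), then
`(Z, (1−Z)·V) ~ Dir(α₁,…,α_q)`.  Here `q = m + 1`. -/
theorem beta_dirichlet_glue
    {Ω : Type*} {m0 : MeasurableSpace Ω} {μ : Measure Ω} [IsProbabilityMeasure μ]
    (m : ℕ) (hm : 2 ≤ m) (α : Fin (m + 1) → ℝ) (hα : ∀ i, 0 < α i)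
    (Z : Ω → ℝ) (V : Ω → (Fin m → ℝ)) (hZm : Measurable Z) (hVm : Measurable V)
    (hZ : μ.map Z = _root_.betaMeasure (α 0) (∑ i : Fin m, α i.succ))
    (hV : IsDirichlet (μ.map V) (fun i => α i.succ))
    (hindep : IndepFun Z V μ) :
    IsDirichlet
      (μ.map fun ω => Fin.cons (Z ω) (fun i => (1 - Z ω) * V ω i)) α := by
  haveI : Nonempty (Fin m) := ⟨⟨0, by omega⟩⟩
  set f : Ω → (Fin (m+1) → ℝ) :=
    fun ω => Fin.cons (Z ω) (fun i => (1 - Z ω) * V ω i) with hf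
  have hfm : Measurable f := by
    apply measurable_pi_lambda
    intro i
    refine Fin.cases ?_ ?_ i
    · simpa [hf] using hZm
    · intro j
      simp only [hf, Fin.cons_succ]
      exact (measurable_const.sub hZm).mul ((measurable_pi_apply j).comp hVm)
  have hb : 0 < ∑ i : Fin m, α i.succ :=
    Finset.sum_pos (fun i _ => hα i.succ) Finset.univ_nonempty
  set b : ℝ := ∑ i : Fin m, α i.succ with hbdef
  -- a.e. facts
  have hZae : ∀ᵐ ω ∂μ, Z ω ∈ Set.Ioo (0:ℝ) 1 := by
    have hmap : μ.map Z (Set.Ioo (0:ℝ) 1)ᶜ = 0 := by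
      rw [hZ, _root_.betaMeasure, withDensity_apply _ measurableSet_Ioo.compl]
      have hz : ∀ x ∈ (Set.Ioo (0:ℝ) 1)ᶜ,
          ENNReal.ofReal
            (if 0 < x ∧ x < 1 then
              (Real.Gamma (α 0 + b) / (Real.Gamma (α 0) * Real.Gamma b)) *
                x ^ (α 0 - 1) * (1 - x) ^ (b - 1)
            else 0) = 0 := by
        intro x hx
        rw [Set.mem_compl_iff, Set.mem_Ioo] at hx
        rw [if_neg hx, ENNReal.ofReal_zero]
      rw [setLIntegral_congr_fun measurableSet_Ioo.compl hz,
        lintegral_zero]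
    rw [Measure.map_apply hZm measurableSet_Ioo.compl] at hmap
    rw [ae_iff]
    exact hmap
  have hSm : MeasurableSet {x : Fin m → ℝ | (∀ i, 0 < x i) ∧ ∑ i, x i = 1} := by
    have hset : {x : Fin m → ℝ | (∀ i, 0 < x i) ∧ ∑ i, x i = 1} =
        (⋂ i, {x : Fin m → ℝ | 0 < x i}) ∩
          ((fun x : Fin m → ℝ => ∑ i, x i) ⁻¹' {1}) := by
      ext x; simp [Set.mem_iInter]
    rw [hset]
    exact (MeasurableSet.iInter fun i =>
        measurableSet_lt measurable_const (measurable_pi_apply i)).inter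
      ((Finset.measurable_sum Finset.univ fun i _ => measurable_pi_apply i)
        (measurableSet_singleton 1))
  have hVae : ∀ᵐ ω ∂μ, (∀ i, 0 < V ω i) ∧ ∑ i, V ω i = 1 := by
    haveI := hV.1
    have h0 : μ.map V {x : Fin m → ℝ | (∀ i, 0 < x i) ∧ ∑ i, x i = 1}ᶜ = 0 :=
      (prob_compl_eq_zero_iff hSm).2 hV.2.1
    rw [Measure.map_apply hVm hSm.compl] at h0
    rw [ae_iff]
    exact h0
  have hSm' : MeasurableSet {x : Fin (m+1) → ℝ | (∀ i, 0 < x i) ∧ ∑ i, x i = 1} := by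
    have hset : {x : Fin (m+1) → ℝ | (∀ i, 0 < x i) ∧ ∑ i, x i = 1} =
        (⋂ i, {x : Fin (m+1) → ℝ | 0 < x i}) ∩
          ((fun x : Fin (m+1) → ℝ => ∑ i, x i) ⁻¹' {1}) := by
      ext x; simp [Set.mem_iInter]
    rw [hset]
    exact (MeasurableSet.iInter fun i =>
        measurableSet_lt measurable_const (measurable_pi_apply i)).inter
      ((Finset.measurable_sum Finset.univ fun i _ => measurable_pi_apply i)
        (measurableSet_singleton 1))
  refine ⟨Measure.isProbabilityMeasure_map hfm.aemeasurable, ?_, ?_⟩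
  · -- support
    have hmem : ∀ᵐ ω ∂μ, f ω ∈ {x : Fin (m+1) → ℝ | (∀ i, 0 < x i) ∧ ∑ i, x i = 1} := by
      filter_upwards [hZae, hVae] with ω hz hv
      constructor
      · intro i
        refine Fin.cases ?_ ?_ i
        · simpa [hf] using hz.1
        · intro j
          simp only [hf, Fin.cons_succ]
          exact mul_pos (by linarith [hz.2]) (hv.1 j)
      · simp only [hf, Fin.sum_cons, ← Finset.mul_sum, hv.2, mul_one]
        ring
    have h0 : μ (f ⁻¹' {x : Fin (m+1) → ℝ | (∀ i, 0 < x i) ∧ ∑ i, x i = 1})ᶜ = 0 :=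
      ae_iff.mp hmem
    rw [Measure.map_apply hfm hSm']
    haveI : IsProbabilityMeasure μ := by infer_instance
    exact (prob_compl_eq_zero_iff (hfm hSm')).1 h0
  · -- moments
    intro k
    set K : ℕ := ∑ i : Fin m, k i.succ with hK
    set g : ℝ → ℝ := fun z => z ^ k 0 * (1 - z) ^ K with hg
    set h : (Fin m → ℝ) → ℝ := fun v => ∏ i, v i ^ k i.succ with hh
    have hgm : Measurable g := by fun_prop
    have hhm : Measurable h :=
      Finset.measurable_prod Finset.univ fun i _ => (measurable_pi_apply i).pow_const _
    have hprodm : Measurable fun x : Fin (m+1) → ℝ => ∏ i, x i ^ k i :=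
      Finset.measurable_prod Finset.univ fun i _ => (measurable_pi_apply i).pow_const _
    rw [integral_map hfm.aemeasurable hprodm.aestronglyMeasurable]
    have hsplit : (fun ω => ∏ i, (f ω i) ^ k i) = fun ω => g (Z ω) * h (V ω) := by
      funext ω
      rw [Fin.prod_univ_succ]
      simp only [hf, hg, hh, Fin.cons_zero, Fin.cons_succ, mul_pow,
        Finset.prod_mul_distrib, Finset.prod_pow_eq_pow_sum, hK]
      ring
    rw [hsplit]
    have hint : ∫ ω, g (Z ω) * h (V ω) ∂μ =
        (∫ ω, g (Z ω) ∂μ) * ∫ ω, h (V ω) ∂μ :=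
      ProbabilityTheory.IndepFun.integral_fun_mul_eq_mul_integral (hindep.comp hgm hhm)
        (hgm.comp hZm).aestronglyMeasurable (hhm.comp hVm).aestronglyMeasurable
    rw [hint]
    have hZint : ∫ ω, g (Z ω) ∂μ =
        (Real.Gamma (α 0 + k 0) * Real.Gamma (b + K) * Real.Gamma (α 0 + b)) /
          (Real.Gamma (α 0) * Real.Gamma b * Real.Gamma (α 0 + b + k 0 + K)) := by
      rw [← integral_map hZm.aemeasurable hgm.aestronglyMeasurable, hZ]
      exact betaMeasure_moment (hα 0) hb (k 0) K
    have hVint : ∫ ω, h (V ω) ∂μ =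
        (∏ i : Fin m, Real.Gamma (α i.succ + k i.succ) / Real.Gamma (α i.succ)) *
          (Real.Gamma b / Real.Gamma (b + ∑ i : Fin m, (k i.succ : ℝ))) :=
      by rw [← integral_map hVm.aemeasurable hhm.aestronglyMeasurable]
         exact hV.2.2 (fun i => k i.succ)
    rw [hZint, hVint]
    rw [Fin.prod_univ_succ (f := fun i => Real.Gamma (α i + k i) / Real.Gamma (α i)),
      Fin.sum_univ_succ (f := fun i => α i),
      Fin.sum_univ_succ (f := fun i => (k i : ℝ))]
    have e1 : ((K : ℝ)) = ∑ i : Fin m, (k i.succ : ℝ) := by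
      rw [hK]; push_cast; ring
    have g1 : Real.Gamma (α 0) ≠ 0 := (Real.Gamma_pos_of_pos (hα 0)).ne'
    have g2 : Real.Gamma b ≠ 0 := (Real.Gamma_pos_of_pos hb).ne'
    have g3 : Real.Gamma (b + ∑ i : Fin m, (k i.succ : ℝ)) ≠ 0 := by
      refine (Real.Gamma_pos_of_pos ?_).ne'
      have : (0:ℝ) ≤ ∑ i : Fin m, (k i.succ : ℝ) :=
        Finset.sum_nonneg fun i _ => Nat.cast_nonneg _
      linarith
    have ha0 := hα 0
    have g4 : Real.Gamma (α 0 + b + k 0 + K) ≠ 0 := by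
      refine (Real.Gamma_pos_of_pos ?_).ne'
      have : (0:ℝ) ≤ (k 0 : ℝ) + K := by positivity
      linarith
    have g5 : Real.Gamma (b + (K:ℝ)) ≠ 0 := by
      refine (Real.Gamma_pos_of_pos ?_).ne'
      have : (0:ℝ) ≤ (K:ℝ) := by positivity
      linarith
    rw [← e1, show α 0 + b + (↑(k 0) + (K:ℝ)) = α 0 + b + ↑(k 0) + K by ring]
    set P : ℝ := ∏ i : Fin m, Real.Gamma (α i.succ + ↑(k i.succ)) / Real.Gamma (α i.succ)
      with hP
    field_simp
    ring
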